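/- arXiv:1304.1616 — 4 statements merged into one kernel-verified Lean document; each statement's English description precedes it below -/
import Mathlib

section
/- Let χ, ψ, β : ℝ³ → ℝ be C¹ functions of the variables (x,u,p). The following are equivalent: (i) for every C² function u : ℝ → ℝ and every x₀ ∈ ℝ, the prolonged curve γ_u(x) = (x, u(x), u'(x)) satisfies (ψ ∘ γ_u)'(x₀) = β(γ_u(x₀)) · (χ ∘ γ_u)'(x₀); (ii) the contact conditions ψ_p = β·χ_p and ψ_x + p·ψ_u = β·(χ_x + p·χ_u) hold at every point (x,u,p) ∈ ℝ³. In other words, (χ,ψ,β) maps prolonged curves to curves on which dU = P dX holds exactly when the contact conditions are satisfied. -/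
private lemma chain_aux (f : ℝ × ℝ × ℝ → ℝ) (hf : ContDiff ℝ 1 f) (u : ℝ → ℝ)
    (hu : ContDiff ℝ 2 u) (x₀ : ℝ) :
    deriv (fun x => f (x, u x, deriv u x)) x₀ =
      fderiv ℝ f (x₀, u x₀, deriv u x₀) (1, deriv u x₀, deriv (deriv u) x₀) := by
  have hu' : ContDiff ℝ 1 (deriv u) :=
    ((contDiff_succ_iff_deriv.mp (by exact_mod_cast hu : ContDiff ℝ (1+1) u)).2.2)
  have h1 : HasDerivAt (fun x : ℝ => x) 1 x₀ := hasDerivAt_id x₀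
  have h2 : HasDerivAt u (deriv u x₀) x₀ :=
    (hu.differentiable (by norm_num) x₀).hasDerivAt
  have h3 : HasDerivAt (deriv u) (deriv (deriv u) x₀) x₀ :=
    (hu'.differentiable one_ne_zero x₀).hasDerivAt
  have hγ : HasDerivAt (fun x => (x, u x, deriv u x))
      ((1 : ℝ), deriv u x₀, deriv (deriv u) x₀) x₀ := h1.prodMk (h2.prodMk h3)
  have hfd : HasFDerivAt f (fderiv ℝ f (x₀, u x₀, deriv u x₀)) (x₀, u x₀, deriv u x₀) :=
    (hf.differentiable one_ne_zero _).hasFDerivAt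
  exact (hfd.comp_hasDerivAt x₀ hγ).deriv

private lemma quad_deriv_aux (u₀ p₀ a x₀ : ℝ) :
    deriv (fun x => u₀ + p₀ * (x - x₀) + a * (x - x₀)^2) = fun x => p₀ + 2 * a * (x - x₀) := by
  funext x
  have h1 : HasDerivAt (fun x : ℝ => x - x₀) 1 x := (hasDerivAt_id x).sub_const x₀
  have h : HasDerivAt (fun x => u₀ + p₀ * (x - x₀) + a * (x - x₀)^2)
      (p₀ + 2 * a * (x - x₀)) x := by
    have := ((hasDerivAt_const x u₀).add (h1.const_mul p₀)).add ((h1.pow 2).const_mul a)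
    convert this using 1
    · rfl
    · rfl
    · rfl
    · rw [show (2:ℕ) - 1 = 1 from rfl]; push_cast; ring
  exact h.deriv

private lemma lin_expand (L : (ℝ × ℝ × ℝ) →L[ℝ] ℝ) (p t : ℝ) :
    L (1, p, t) = L (1, 0, 0) + p * L (0, 1, 0) + t * L (0, 0, 1) := by
  have : ((1 : ℝ), p, t) = (1, (0:ℝ), (0:ℝ)) + p • (0, 1, 0) + t • (0, 0, 1) := by
    simp [Prod.ext_iff]
  rw [this, map_add, map_add, map_smul, map_smul]
  simp

/-- `(χ, ψ, β)` maps prolonged curves `γ_u(x) = (x, u x, u' x)` to curves along which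
`dU = P dX` holds (i.e. `(ψ ∘ γ_u)' = β(γ_u) · (χ ∘ γ_u)'`) if and only if the contact
conditions `ψ_p = β χ_p` and `ψ_x + p ψ_u = β (χ_x + p χ_u)` hold at every point. -/
theorem contact_conditions_iff_preserves_contact
    (χ ψ β : ℝ × ℝ × ℝ → ℝ)
    (hχ : ContDiff ℝ 1 χ) (hψ : ContDiff ℝ 1 ψ) (hβ : ContDiff ℝ 1 β) :
    (∀ u : ℝ → ℝ, ContDiff ℝ 2 u → ∀ x₀ : ℝ,
        deriv (fun x => ψ (x, u x, deriv u x)) x₀ =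
          β (x₀, u x₀, deriv u x₀) * deriv (fun x => χ (x, u x, deriv u x)) x₀) ↔
    (∀ z : ℝ × ℝ × ℝ,
        fderiv ℝ ψ z (0, 0, 1) = β z * fderiv ℝ χ z (0, 0, 1) ∧
        fderiv ℝ ψ z (1, 0, 0) + z.2.2 * fderiv ℝ ψ z (0, 1, 0) =
          β z * (fderiv ℝ χ z (1, 0, 0) + z.2.2 * fderiv ℝ χ z (0, 1, 0))) := by
  constructor
  · intro h z
    obtain ⟨x₀, u₀, p₀⟩ := z
    have key : ∀ a : ℝ,
        fderiv ℝ ψ (x₀, u₀, p₀) (1, p₀, 2 * a) =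
          β (x₀, u₀, p₀) * fderiv ℝ χ (x₀, u₀, p₀) (1, p₀, 2 * a) := by
      intro a
      set u : ℝ → ℝ := fun x => u₀ + p₀ * (x - x₀) + a * (x - x₀)^2 with hu_def
      have hu : ContDiff ℝ 2 u := by fun_prop
      have hd : deriv u = fun x => p₀ + 2 * a * (x - x₀) := quad_deriv_aux u₀ p₀ a x₀
      have hd0 : deriv u x₀ = p₀ := by rw [hd]; simp
      have hdd : deriv (deriv u) x₀ = 2 * a := by
        rw [hd]
        have h1 : HasDerivAt (fun x : ℝ => p₀ + 2 * a * (x - x₀)) (2 * a) x₀ := by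
          have := (hasDerivAt_const x₀ p₀).add
            (((hasDerivAt_id x₀).sub_const x₀).const_mul (2 * a))
          simpa [Pi.add_def] using this
        exact h1.deriv
      have hu0 : u x₀ = u₀ := by simp [hu_def]
      have := h u hu x₀
      rw [chain_aux ψ hψ u hu x₀, chain_aux χ hχ u hu x₀, hu0, hd0, hdd] at this
      exact this
    have key' : ∀ t : ℝ,
        fderiv ℝ ψ (x₀, u₀, p₀) (1, 0, 0) + p₀ * fderiv ℝ ψ (x₀, u₀, p₀) (0, 1, 0)
          + t * fderiv ℝ ψ (x₀, u₀, p₀) (0, 0, 1) =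
        β (x₀, u₀, p₀) * (fderiv ℝ χ (x₀, u₀, p₀) (1, 0, 0)
          + p₀ * fderiv ℝ χ (x₀, u₀, p₀) (0, 1, 0)
          + t * fderiv ℝ χ (x₀, u₀, p₀) (0, 0, 1)) := by
      intro t
      have := key (t / 2)
      rw [show 2 * (t / 2) = t by ring,
        lin_expand (fderiv ℝ ψ (x₀, u₀, p₀)) p₀ t,
        lin_expand (fderiv ℝ χ (x₀, u₀, p₀)) p₀ t] at this
      exact this
    have k0 := key' 0
    have k1 := key' 1
    constructor
    · linear_combination k1 - k0
    · linear_combination k0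
  · intro h u hu x₀
    rw [chain_aux ψ hψ u hu x₀, chain_aux χ hχ u hu x₀,
      lin_expand (fderiv ℝ ψ (x₀, u x₀, deriv u x₀)) (deriv u x₀) (deriv (deriv u) x₀),
      lin_expand (fderiv ℝ χ (x₀, u x₀, deriv u x₀)) (deriv u x₀) (deriv (deriv u) x₀)]
    obtain ⟨h1, h2⟩ := h (x₀, u x₀, deriv u x₀)
    simp only at h1 h2
    linear_combination h2 + (deriv (deriv u) x₀) * h1
end

section
/- Let χ, ψ, β : ℝ³ → ℝ be C¹ functions of the variables (x,u,p) satisfying the contact conditions, and let u : ℝ → ℝ be C² on a neighborhood of x₀ with prolonged curve γ_u(x) = (x, u(x), u'(x)). Set X̃ = χ ∘ γ_u and assume X̃'(x) ≠ 0 for all x near x₀. Suppose V : ℝ → ℝ is C² on a neighborhood of X̃(x₀) with V ∘ X̃ = ψ ∘ γ_u near x₀. Then, writing p = u'(x₀) and q = u''(x₀) and evaluating all partial derivatives at (x₀, u(x₀), p): V'(X̃(x₀)) = β(x₀, u(x₀), p) and V''(X̃(x₀)) = (β_x + p·β_u + q·β_p)/(χ_x + p·χ_u + q·χ_p). That is,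 the prolonged contact transformation acts on second-order jets by P = β and Q = (β_x + pβ_u + qβ_p)/(χ_x + pχ_u + qχ_p). -/
private lemma clm_decomp (f : ℝ × ℝ × ℝ →L[ℝ] ℝ) (a b : ℝ) :
    f (1, a, b) = f (1, 0, 0) + a * f (0, 1, 0) + b * f (0, 0, 1) := by
  have h : ((1, a, b) : ℝ × ℝ × ℝ) = (1, 0, 0) + a • ((0, 1, 0) : ℝ × ℝ × ℝ)
      + b • ((0, 0, 1) : ℝ × ℝ × ℝ) := by
    simp [Prod.ext_iff]
  rw [h, map_add, map_add, map_smul, map_smul, smul_eq_mul, smul_eq_mul]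

private lemma aux_deriv (f : ℝ → ℝ) (x : ℝ) (hf : ContDiffAt ℝ 2 f x) :
    ContDiffAt ℝ 1 (deriv f) x := by
  obtain ⟨s, hs, hfs⟩ := hf.contDiffOn le_rfl (by simp)
  have h1 : ContDiffOn ℝ 1 (deriv f) (interior s) :=
    (hfs.mono interior_subset).deriv_of_isOpen isOpen_interior (by norm_num)
  exact h1.contDiffAt (interior_mem_nhds.mpr hs)

/-- A contact transformation `(χ, ψ, β)` prolongs to second-order jets by
`P = β` and `Q = (β_x + p β_u + q β_p)/(χ_x + p χ_u + q χ_p)`. -/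
theorem second_prolongation_of_contact_transformation
    (χ ψ β : ℝ × ℝ × ℝ → ℝ)
    (hχ : ContDiff ℝ 1 χ) (hψ : ContDiff ℝ 1 ψ) (hβ : ContDiff ℝ 1 β)
    (contact₁ : ∀ z : ℝ × ℝ × ℝ, fderiv ℝ ψ z (0, 0, 1) = β z * fderiv ℝ χ z (0, 0, 1))
    (contact₂ : ∀ z : ℝ × ℝ × ℝ,
      fderiv ℝ ψ z (1, 0, 0) + z.2.2 * fderiv ℝ ψ z (0, 1, 0) =
        β z * (fderiv ℝ χ z (1, 0, 0) + z.2.2 * fderiv ℝ χ z (0, 1, 0)))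
    (u : ℝ → ℝ) (x₀ : ℝ) (hu : ContDiffAt ℝ 2 u x₀)
    (γ : ℝ → ℝ × ℝ × ℝ) (hγ : ∀ x, γ x = (x, u x, deriv u x))
    (Xt : ℝ → ℝ) (hXt : ∀ x, Xt x = χ (γ x))
    (hX' : ∀ᶠ x in nhds x₀, deriv Xt x ≠ 0)
    (V : ℝ → ℝ) (hV : ContDiffAt ℝ 2 V (Xt x₀))
    (hVU : ∀ᶠ x in nhds x₀, V (Xt x) = ψ (γ x))
    (p q : ℝ) (hp : p = deriv u x₀) (hq : q = deriv (deriv u) x₀) :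
    deriv V (Xt x₀) = β (x₀, u x₀, p) ∧
    deriv (deriv V) (Xt x₀) =
      (fderiv ℝ β (x₀, u x₀, p) (1, 0, 0) + p * fderiv ℝ β (x₀, u x₀, p) (0, 1, 0)
          + q * fderiv ℝ β (x₀, u x₀, p) (0, 0, 1)) /
        (fderiv ℝ χ (x₀, u x₀, p) (1, 0, 0) + p * fderiv ℝ χ (x₀, u x₀, p) (0, 1, 0)
          + q * fderiv ℝ χ (x₀, u x₀, p) (0, 0, 1)) := by
  have hγ' : γ = fun x => (x, u x, deriv u x) := funext hγ
  subst hγ'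
  have hXt' : Xt = fun x => χ (x, u x, deriv u x) := funext hXt
  subst hXt'
  set Xt : ℝ → ℝ := fun x => χ (x, u x, deriv u x) with hXtdef
  have hχd : ∀ z, HasFDerivAt χ (fderiv ℝ χ z) z :=
    fun z => (hχ.differentiable one_ne_zero z).hasFDerivAt
  have hψd : ∀ z, HasFDerivAt ψ (fderiv ℝ ψ z) z :=
    fun z => (hψ.differentiable one_ne_zero z).hasFDerivAt
  have hβd : ∀ z, HasFDerivAt β (fderiv ℝ β z) z :=
    fun z => (hβ.differentiable one_ne_zero z).hasFDerivAt
  -- u is C² near x₀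
  have hu2 : ∀ᶠ x in nhds x₀, ContDiffAt ℝ 2 u x := hu.eventually (by simp)
  -- derivative of γ where u is C²
  have hγder : ∀ x, ContDiffAt ℝ 2 u x →
      HasDerivAt (fun x => ((x, u x, deriv u x) : ℝ × ℝ × ℝ))
        (1, deriv u x, deriv (deriv u) x) x := by
    intro x hx
    exact (hasDerivAt_id x).prodMk
      (((hx.differentiableAt two_ne_zero).hasDerivAt).prodMk
        (((aux_deriv u x hx).differentiableAt one_ne_zero).hasDerivAt)
      )
  -- Xt derivative where u is C²
  have hXtder : ∀ x, ContDiffAt ℝ 2 u x →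
      HasDerivAt Xt (fderiv ℝ χ (x, u x, deriv u x) (1, deriv u x, deriv (deriv u) x)) x := by
    intro x hx
    exact (hχd _).comp_hasDerivAt x (hγder x hx)
  -- Xt continuous at x₀
  have hXtcont : ContinuousAt Xt x₀ := by
    apply (hχ.continuous.continuousAt).comp
    exact continuousAt_id.prodMk (hu.continuousAt.prodMk (aux_deriv u x₀ hu).continuousAt)
  -- V is C² near Xt x₀, pulled back
  have hVev : ∀ᶠ x in nhds x₀, ContDiffAt ℝ 2 V (Xt x) :=
    hXtcont.eventually (hV.eventually (by simp))
  -- key eventual identity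
  have key : ∀ᶠ x in nhds x₀, deriv V (Xt x) = β (x, u x, deriv u x) := by
    filter_upwards [hu2, hX', hVev, hVU.eventually_nhds] with x h1 h2 h3 h4
    have hXd := hXtder x h1
    set D := fderiv ℝ χ (x, u x, deriv u x) (1, deriv u x, deriv (deriv u) x) with hD
    have hDne : D ≠ 0 := by rwa [hXd.deriv] at h2
    have hcomp : HasDerivAt (fun y => V (Xt y)) (deriv V (Xt x) * D) x :=
      ((h3.differentiableAt two_ne_zero).hasDerivAt).comp x hXd
    have hψcomp : HasDerivAt (fun y => ψ (y, u y, deriv u y))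
        (fderiv ℝ ψ (x, u x, deriv u x) (1, deriv u x, deriv (deriv u) x)) x :=
      (hψd _).comp_hasDerivAt x (hγder x h1)
    have he : (fun y => ψ (y, u y, deriv u y)) =ᶠ[nhds x] (fun y => V (Xt y)) :=
      h4.mono fun y hy => hy.symm
    have huniq : deriv V (Xt x) * D
        = fderiv ℝ ψ (x, u x, deriv u x) (1, deriv u x, deriv (deriv u) x) :=
      (hcomp.congr_of_eventuallyEq he).unique hψcomp
    have hrhs : fderiv ℝ ψ (x, u x, deriv u x) (1, deriv u x, deriv (deriv u) x)
        = β (x, u x, deriv u x) * D := by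
      rw [clm_decomp]
      have e2 := clm_decomp (fderiv ℝ χ (x, u x, deriv u x)) (deriv u x) (deriv (deriv u) x)
      have c1 := contact₁ (x, u x, deriv u x)
      have c2 := contact₂ (x, u x, deriv u x)
      simp only at c1 c2
      linear_combination c2 + deriv (deriv u) x * c1 - β (x, u x, deriv u x) * e2
    rw [hrhs] at huniq
    exact mul_right_cancel₀ hDne huniq
  have hP : deriv V (Xt x₀) = β (x₀, u x₀, p) := by
    have := key.self_of_nhds
    rwa [← hp] at this
  refine ⟨hP, ?_⟩
  -- second derivative
  have hγd₀ : HasDerivAt (fun x => ((x, u x, deriv u x) : ℝ × ℝ × ℝ)) (1, p, q) x₀ := by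
    rw [hp, hq]; exact hγder x₀ hu
  have hXd₀ : HasDerivAt Xt (fderiv ℝ χ (x₀, u x₀, p) (1, p, q)) x₀ := by
    have : ((x₀, u x₀, p) : ℝ × ℝ × ℝ) = (x₀, u x₀, deriv u x₀) := by rw [hp]
    rw [this]
    exact (hχd _).comp_hasDerivAt x₀ hγd₀
  set D₀ := fderiv ℝ χ (x₀, u x₀, p) (1, p, q) with hD₀def
  have hD₀ne : D₀ ≠ 0 := by
    have := hX'.self_of_nhds
    rwa [hXd₀.deriv] at this
  have hlhs : HasDerivAt (fun x => deriv V (Xt x)) (deriv (deriv V) (Xt x₀) * D₀) x₀ :=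
    (((aux_deriv V _ hV).differentiableAt one_ne_zero).hasDerivAt).comp x₀ hXd₀
  have hrhs : HasDerivAt (fun x => β (x, u x, deriv u x))
      (fderiv ℝ β (x₀, u x₀, p) (1, p, q)) x₀ := by
    have : ((x₀, u x₀, p) : ℝ × ℝ × ℝ) = (x₀, u x₀, deriv u x₀) := by rw [hp]
    rw [this]
    exact (hβd _).comp_hasDerivAt x₀ hγd₀
  have he : (fun x => β (x, u x, deriv u x)) =ᶠ[nhds x₀] (fun x => deriv V (Xt x)) :=
    key.mono fun y hy => hy.symm
  have huniq : deriv (deriv V) (Xt x₀) * D₀ = fderiv ℝ β (x₀, u x₀, p) (1, p, q) :=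
    (hlhs.congr_of_eventuallyEq he).unique hrhs
  have hD₀exp : D₀ = fderiv ℝ χ (x₀, u x₀, p) (1, 0, 0) + p * fderiv ℝ χ (x₀, u x₀, p) (0, 1, 0)
      + q * fderiv ℝ χ (x₀, u x₀, p) (0, 0, 1) := clm_decomp _ p q
  rw [eq_div_iff (by rw [← hD₀exp]; exact hD₀ne), ← hD₀exp, ← clm_decomp]
  exact huniq
end

section
/- For f : ℝ → ℝ of class C² with nowhere-vanishing derivative and g : ℝ → ℝ of class C¹, let T_{f,g} : ℝ³ → ℝ³ be the map T_{f,g}(x,y,u) = (f(x), f'(x)·y + g(x), u + (f''(x)·y + g'(x))/f'(x)). Then for any two such pairs (f₁,g₁) and (f₂,g₂), the composition satisfies T_{f₂,g₂} ∘ T_{f₁,g₁} = T_{F,G}, where F = f₂ ∘ f₁ and G = (f₂' ∘ f₁)·g₁ + g₂ ∘ f₁ (and F is C² with nowhere-vanishing derivative, G is C¹). Thus these transformations form a pseudo-group. -/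
/-- The pseudo-group transformation `X = f(x)`, `Y = f'(x)·y + g(x)`,
`U = u + (f''(x)·y + g'(x))/f'(x)` on `ℝ³`. -/
noncomputable def pgTransform (f g : ℝ → ℝ) (w : ℝ × ℝ × ℝ) : ℝ × ℝ × ℝ :=
  (f w.1, deriv f w.1 * w.2.1 + g w.1,
    w.2.2 + (deriv (deriv f) w.1 * w.2.1 + deriv g w.1) / deriv f w.1)

/-- The transformations `T_{f,g}` form a pseudo-group: the composition
`T_{f₂,g₂} ∘ T_{f₁,g₁}` equals `T_{F,G}` with `F = f₂ ∘ f₁` and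
`G = (f₂' ∘ f₁)·g₁ + g₂ ∘ f₁`, where `F` is `C²` with nowhere-vanishing derivative
and `G` is `C¹`. -/
theorem pgTransform_comp
    (f₁ g₁ f₂ g₂ : ℝ → ℝ)
    (hf₁ : ContDiff ℝ 2 f₁) (hf₁' : ∀ x, deriv f₁ x ≠ 0) (hg₁ : ContDiff ℝ 1 g₁)
    (hf₂ : ContDiff ℝ 2 f₂) (hf₂' : ∀ x, deriv f₂ x ≠ 0) (hg₂ : ContDiff ℝ 1 g₂)
    (F G : ℝ → ℝ) (hF : F = f₂ ∘ f₁)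
    (hG : ∀ x, G x = deriv f₂ (f₁ x) * g₁ x + g₂ (f₁ x)) :
    (pgTransform f₂ g₂ ∘ pgTransform f₁ g₁ = pgTransform F G) ∧
    ContDiff ℝ 2 F ∧ (∀ x, deriv F x ≠ 0) ∧ ContDiff ℝ 1 G := by
  have hdf₁ : Differentiable ℝ f₁ := hf₁.differentiable (by norm_num)
  have hdf₂ : Differentiable ℝ f₂ := hf₂.differentiable (by norm_num)
  have hcd₁ : ContDiff ℝ 1 (deriv f₁) :=
    (contDiff_succ_iff_deriv.mp (show ContDiff ℝ (1+1) f₁ by norm_num; exact hf₁)).2.2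
  have hcd₂ : ContDiff ℝ 1 (deriv f₂) :=
    (contDiff_succ_iff_deriv.mp (show ContDiff ℝ (1+1) f₂ by norm_num; exact hf₂)).2.2
  have hdd₁ : Differentiable ℝ (deriv f₁) := hcd₁.differentiable one_ne_zero
  have hdd₂ : Differentiable ℝ (deriv f₂) := hcd₂.differentiable one_ne_zero
  have hdg₁ : Differentiable ℝ g₁ := hg₁.differentiable one_ne_zero
  have hdg₂ : Differentiable ℝ g₂ := hg₂.differentiable one_ne_zero
  have hFc : ContDiff ℝ 2 F := hF ▸ hf₂.comp hf₁
  have hF' : ∀ x, deriv F x = deriv f₂ (f₁ x) * deriv f₁ x := by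
    intro x
    rw [hF]
    exact deriv_comp x (hdf₂ _) (hdf₁ x)
  have hF'' : ∀ x, deriv (deriv F) x =
      deriv (deriv f₂) (f₁ x) * deriv f₁ x * deriv f₁ x
        + deriv f₂ (f₁ x) * deriv (deriv f₁) x := by
    intro x
    have hfun : deriv F = fun x => deriv f₂ (f₁ x) * deriv f₁ x := funext hF'
    have h2x : HasDerivAt (fun x => deriv f₂ (f₁ x))
        (deriv (deriv f₂) (f₁ x) * deriv f₁ x) x :=
      ((hdd₂ (f₁ x)).hasDerivAt.comp x (hdf₁ x).hasDerivAt)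
    rw [hfun]
    exact ((h2x.mul (hdd₁ x).hasDerivAt).deriv).trans (by ring)
  have hG' : ∀ x, deriv G x =
      deriv (deriv f₂) (f₁ x) * deriv f₁ x * g₁ x + deriv f₂ (f₁ x) * deriv g₁ x
        + deriv g₂ (f₁ x) * deriv f₁ x := by
    intro x
    have hfun : G = fun x => deriv f₂ (f₁ x) * g₁ x + g₂ (f₁ x) := funext hG
    have h2x : HasDerivAt (fun x => deriv f₂ (f₁ x))
        (deriv (deriv f₂) (f₁ x) * deriv f₁ x) x :=
      ((hdd₂ (f₁ x)).hasDerivAt.comp x (hdf₁ x).hasDerivAt)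
    have h3x : HasDerivAt (fun x => g₂ (f₁ x))
        (deriv g₂ (f₁ x) * deriv f₁ x) x :=
      ((hdg₂ (f₁ x)).hasDerivAt.comp x (hdf₁ x).hasDerivAt)
    rw [hfun]
    exact ((((h2x.mul (hdg₁ x).hasDerivAt).add h3x).deriv)).trans (by ring)
  refine ⟨?_, hFc, ?_, ?_⟩
  · funext w
    obtain ⟨x, y, u⟩ := w
    have h1 := hf₁' x
    have h2 := hf₂' (f₁ x)
    simp only [Function.comp_apply, pgTransform, hF', hF'', hG, hG']
    refine Prod.ext ?_ (Prod.ext ?_ ?_)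
    · simp [hF]
    · simp; ring
    · simp only
      field_simp
      ring
  · intro x
    rw [hF' x]
    exact mul_ne_zero (hf₂' _) (hf₁' x)
  · have : G = (deriv f₂ ∘ f₁) * g₁ + g₂ ∘ f₁ := by
      funext x; simp [hG x]
    rw [this]
    exact ((hcd₂.comp (hf₁.of_le (by norm_num))).mul hg₁).add
      (hg₂.comp (hf₁.of_le (by norm_num)))
end

section
/- Let U ⊆ ℝ³ be open, Φ = (φ, β, α) : U → ℝ³ of class C², let A, B, C, G : ℝ³ → ℝ be C¹ and g : U → ℝ be any function. Define a, b, c : U → ℝ by the three transformation equations a = (A∘Φ)(φ_xβ_y − β_xφ_y) + (B∘Φ)(φ_xα_y − α_xφ_y) + (C∘Φ)(β_xα_y − α_xβ_y), and the analogous equations for b (with (x,z) in place of (x,y)) and c (with (y,z) in place of (x,y)). Assume a(w) ≠ 0 and A(Φ(w)) ≠ 0 for all w ∈ U, and that the vector-field transformation rule G∘Φ = (g/a)·(c·α_x − b·α_y + a·α_z) holds on U. Then the first-order differential invariant I = (g/a)·(∂_z a − ∂_y b + ∂_x c) is preserved: (g/a)·(∂_z a − ∂_y b + ∂_x c) = ((G/A)·(∂₃A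 − ∂₂B + ∂₁C)) ∘ Φ on U, where ∂₁, ∂₂, ∂₃ are the partial derivatives in the target variables. -/
private lemma hasFDerivAt_fderiv_apply
    {U : Set (ℝ × ℝ × ℝ)} (hU : IsOpen U) {f : ℝ × ℝ × ℝ → ℝ}
    (hf : ContDiffOn ℝ 2 f U) {w : ℝ × ℝ × ℝ} (hw : w ∈ U) (u : ℝ × ℝ × ℝ) :
    HasFDerivAt (fun x => fderiv ℝ f x u)
      ((ContinuousLinearMap.apply ℝ ℝ u).comp (fderiv ℝ (fderiv ℝ f) w)) w := by
  have h1 : ContDiffOn ℝ 1 (fderiv ℝ f) U := hf.fderiv_of_isOpen hU (by norm_num)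
  have h2 : DifferentiableAt ℝ (fderiv ℝ f) w :=
    (h1.differentiableOn one_ne_zero).differentiableAt (hU.mem_nhds hw)
  exact (ContinuousLinearMap.apply ℝ ℝ u).hasFDerivAt.comp w h2.hasFDerivAt

private lemma clm_expand (L : (ℝ × ℝ × ℝ) →L[ℝ] ℝ) (x y z : ℝ) :
    L (x, y, z) = x * L (1,0,0) + y * L (0,1,0) + z * L (0,0,1) := by
  have hv : ((x, y, z) : ℝ × ℝ × ℝ)
      = x • ((1:ℝ),(0:ℝ),(0:ℝ)) + y • ((0:ℝ),(1:ℝ),(0:ℝ)) + z • ((0:ℝ),(0:ℝ),(1:ℝ)) := by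
    simp [Prod.ext_iff]
  rw [hv, map_add, map_add, map_smul, map_smul, map_smul, smul_eq_mul, smul_eq_mul,
    smul_eq_mul]

set_option maxHeartbeats 2000000 in
/-- The first-order differential invariant `I = (g/a)·(a_z − b_y + c_x)` of the
simultaneous equivalence problem for a two-form and a vector field on `ℝ³` is
preserved: if `(a,b,c)` is the pullback of `(A,B,C)` under `Φ = (φ,β,α)` and the
vector-field transformation rule `G∘Φ = (g/a)(c·α_x − b·α_y + a·α_z)` holds, then
`(g/a)(∂_z a − ∂_y b + ∂_x c) = ((G/A)(∂₃A − ∂₂B + ∂₁C)) ∘ Φ` on `U`. -/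
theorem first_order_invariant_preserved
    (U : Set (ℝ × ℝ × ℝ)) (hU : IsOpen U)
    (φ β α : ℝ × ℝ × ℝ → ℝ)
    (Φ : ℝ × ℝ × ℝ → ℝ × ℝ × ℝ) (hΦdef : ∀ w, Φ w = (φ w, β w, α w))
    (hΦ : ContDiffOn ℝ 2 Φ U)
    (A B C G : ℝ × ℝ × ℝ → ℝ)
    (hA : ContDiff ℝ 1 A) (hB : ContDiff ℝ 1 B) (hC : ContDiff ℝ 1 C)
    (hG : ContDiff ℝ 1 G)
    (g : ℝ × ℝ × ℝ → ℝ)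
    (a b c : ℝ × ℝ × ℝ → ℝ)
    (ha : ∀ w, a w =
      A (Φ w) * (fderiv ℝ φ w (1,0,0) * fderiv ℝ β w (0,1,0)
        - fderiv ℝ β w (1,0,0) * fderiv ℝ φ w (0,1,0))
      + B (Φ w) * (fderiv ℝ φ w (1,0,0) * fderiv ℝ α w (0,1,0)
        - fderiv ℝ α w (1,0,0) * fderiv ℝ φ w (0,1,0))
      + C (Φ w) * (fderiv ℝ β w (1,0,0) * fderiv ℝ α w (0,1,0)
        - fderiv ℝ α w (1,0,0) * fderiv ℝ β w (0,1,0)))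
    (hb : ∀ w, b w =
      A (Φ w) * (fderiv ℝ φ w (1,0,0) * fderiv ℝ β w (0,0,1)
        - fderiv ℝ β w (1,0,0) * fderiv ℝ φ w (0,0,1))
      + B (Φ w) * (fderiv ℝ φ w (1,0,0) * fderiv ℝ α w (0,0,1)
        - fderiv ℝ α w (1,0,0) * fderiv ℝ φ w (0,0,1))
      + C (Φ w) * (fderiv ℝ β w (1,0,0) * fderiv ℝ α w (0,0,1)
        - fderiv ℝ α w (1,0,0) * fderiv ℝ β w (0,0,1)))
    (hc : ∀ w, c w =
      A (Φ w) * (fderiv ℝ φ w (0,1,0) * fderiv ℝ β w (0,0,1)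
        - fderiv ℝ β w (0,1,0) * fderiv ℝ φ w (0,0,1))
      + B (Φ w) * (fderiv ℝ φ w (0,1,0) * fderiv ℝ α w (0,0,1)
        - fderiv ℝ α w (0,1,0) * fderiv ℝ φ w (0,0,1))
      + C (Φ w) * (fderiv ℝ β w (0,1,0) * fderiv ℝ α w (0,0,1)
        - fderiv ℝ α w (0,1,0) * fderiv ℝ β w (0,0,1)))
    (ha0 : ∀ w ∈ U, a w ≠ 0) (hA0 : ∀ w ∈ U, A (Φ w) ≠ 0)
    (hGrule : ∀ w ∈ U, G (Φ w) =
      (g w / a w) * (c w * fderiv ℝ α w (1,0,0) - b w * fderiv ℝ α w (0,1,0)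
        + a w * fderiv ℝ α w (0,0,1))) :
    ∀ w ∈ U,
      (g w / a w) *
          (fderiv ℝ a w (0,0,1) - fderiv ℝ b w (0,1,0) + fderiv ℝ c w (1,0,0)) =
        (G (Φ w) / A (Φ w)) *
          (fderiv ℝ A (Φ w) (0,0,1) - fderiv ℝ B (Φ w) (0,1,0)
            + fderiv ℝ C (Φ w) (1,0,0)) := by
  intro w hw
  have hΦfun : Φ = fun x => (φ x, β x, α x) := funext hΦdef
  have hφ : ContDiffOn ℝ 2 φ U := by
    have h : φ = fun x => (Φ x).1 := by rw [hΦfun]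
    rw [h]; exact hΦ.fst
  have hβ : ContDiffOn ℝ 2 β U := by
    have h : β = fun x => (Φ x).2.1 := by rw [hΦfun]
    rw [h]; exact hΦ.snd.fst
  have hα : ContDiffOn ℝ 2 α U := by
    have h : α = fun x => (Φ x).2.2 := by rw [hΦfun]
    rw [h]; exact hΦ.snd.snd
  have hφd : DifferentiableAt ℝ φ w :=
    (hφ.differentiableOn (by norm_num)).differentiableAt (hU.mem_nhds hw)
  have hβd : DifferentiableAt ℝ β w :=
    (hβ.differentiableOn (by norm_num)).differentiableAt (hU.mem_nhds hw)
  have hαd : DifferentiableAt ℝ α w :=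
    (hα.differentiableOn (by norm_num)).differentiableAt (hU.mem_nhds hw)
  have hΦ' : HasFDerivAt Φ
      ((fderiv ℝ φ w).prod ((fderiv ℝ β w).prod (fderiv ℝ α w))) w := by
    rw [hΦfun]
    exact hφd.hasFDerivAt.prodMk (hβd.hasFDerivAt.prodMk hαd.hasFDerivAt)
  have hAΦ : HasFDerivAt (fun x => A (Φ x))
      ((fderiv ℝ A (Φ w)).comp
        ((fderiv ℝ φ w).prod ((fderiv ℝ β w).prod (fderiv ℝ α w)))) w :=
    (hA.differentiable one_ne_zero (Φ w)).hasFDerivAt.comp w hΦ'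
  have hBΦ : HasFDerivAt (fun x => B (Φ x))
      ((fderiv ℝ B (Φ w)).comp
        ((fderiv ℝ φ w).prod ((fderiv ℝ β w).prod (fderiv ℝ α w)))) w :=
    (hB.differentiable one_ne_zero (Φ w)).hasFDerivAt.comp w hΦ'
  have hCΦ : HasFDerivAt (fun x => C (Φ x))
      ((fderiv ℝ C (Φ w)).comp
        ((fderiv ℝ φ w).prod ((fderiv ℝ β w).prod (fderiv ℝ α w)))) w :=
    (hC.differentiable one_ne_zero (Φ w)).hasFDerivAt.comp w hΦ'
  have Dφ := fun u => hasFDerivAt_fderiv_apply hU hφ hw u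
  have Dβ := fun u => hasFDerivAt_fderiv_apply hU hβ hw u
  have Dα := fun u => hasFDerivAt_fderiv_apply hU hα hw u
  -- derivatives of a, b, c
  have hae : HasFDerivAt a _ w :=
    HasFDerivAt.congr_of_eventuallyEq
      (((hAΦ.mul (((Dφ (1,0,0)).mul (Dβ (0,1,0))).sub
          ((Dβ (1,0,0)).mul (Dφ (0,1,0))))).add
        (hBΦ.mul (((Dφ (1,0,0)).mul (Dα (0,1,0))).sub
          ((Dα (1,0,0)).mul (Dφ (0,1,0)))))).add
        (hCΦ.mul (((Dβ (1,0,0)).mul (Dα (0,1,0))).sub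
          ((Dα (1,0,0)).mul (Dβ (0,1,0))))))
      (Filter.Eventually.of_forall fun x => ha x)
  have hbe : HasFDerivAt b _ w :=
    HasFDerivAt.congr_of_eventuallyEq
      (((hAΦ.mul (((Dφ (1,0,0)).mul (Dβ (0,0,1))).sub
          ((Dβ (1,0,0)).mul (Dφ (0,0,1))))).add
        (hBΦ.mul (((Dφ (1,0,0)).mul (Dα (0,0,1))).sub
          ((Dα (1,0,0)).mul (Dφ (0,0,1)))))).add
        (hCΦ.mul (((Dβ (1,0,0)).mul (Dα (0,0,1))).sub
          ((Dα (1,0,0)).mul (Dβ (0,0,1))))))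
      (Filter.Eventually.of_forall fun x => hb x)
  have hce : HasFDerivAt c _ w :=
    HasFDerivAt.congr_of_eventuallyEq
      (((hAΦ.mul (((Dφ (0,1,0)).mul (Dβ (0,0,1))).sub
          ((Dβ (0,1,0)).mul (Dφ (0,0,1))))).add
        (hBΦ.mul (((Dφ (0,1,0)).mul (Dα (0,0,1))).sub
          ((Dα (0,1,0)).mul (Dφ (0,0,1)))))).add
        (hCΦ.mul (((Dβ (0,1,0)).mul (Dα (0,0,1))).sub
          ((Dα (0,1,0)).mul (Dβ (0,0,1))))))
      (Filter.Eventually.of_forall fun x => hc x)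
  -- symmetry of second derivatives
  have hsφ : IsSymmSndFDerivAt ℝ φ w :=
    (hφ.contDiffAt (hU.mem_nhds hw)).isSymmSndFDerivAt (by norm_num)
  have hsβ : IsSymmSndFDerivAt ℝ β w :=
    (hβ.contDiffAt (hU.mem_nhds hw)).isSymmSndFDerivAt (by norm_num)
  have hsα : IsSymmSndFDerivAt ℝ α w :=
    (hα.contDiffAt (hU.mem_nhds hw)).isSymmSndFDerivAt (by norm_num)
  -- claim 1: d(pullback) = pullback of d
  have claim1 : fderiv ℝ a w (0,0,1) - fderiv ℝ b w (0,1,0) + fderiv ℝ c w (1,0,0)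
      = (fderiv ℝ A (Φ w) (0,0,1) - fderiv ℝ B (Φ w) (0,1,0)
          + fderiv ℝ C (Φ w) (1,0,0)) *
        (fderiv ℝ φ w (1,0,0) * (fderiv ℝ β w (0,1,0) * fderiv ℝ α w (0,0,1)
            - fderiv ℝ α w (0,1,0) * fderiv ℝ β w (0,0,1))
          - fderiv ℝ β w (1,0,0) * (fderiv ℝ φ w (0,1,0) * fderiv ℝ α w (0,0,1)
            - fderiv ℝ α w (0,1,0) * fderiv ℝ φ w (0,0,1))
          + fderiv ℝ α w (1,0,0) * (fderiv ℝ φ w (0,1,0) * fderiv ℝ β w (0,0,1)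
            - fderiv ℝ β w (0,1,0) * fderiv ℝ φ w (0,0,1))) := by
    rw [hae.fderiv, hbe.fderiv, hce.fderiv]
    simp only [ContinuousLinearMap.add_apply, ContinuousLinearMap.coe_sub',
      Pi.sub_apply, ContinuousLinearMap.coe_smul', Pi.smul_apply,
      ContinuousLinearMap.coe_comp', Function.comp_apply,
      ContinuousLinearMap.apply_apply, ContinuousLinearMap.prod_apply,
      smul_eq_mul, Pi.mul_apply]
    rw [clm_expand (fderiv ℝ A (Φ w)) (fderiv ℝ φ w (0,0,1)) (fderiv ℝ β w (0,0,1))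
      (fderiv ℝ α w (0,0,1))]
    rw [clm_expand (fderiv ℝ B (Φ w)) (fderiv ℝ φ w (0,0,1)) (fderiv ℝ β w (0,0,1))
      (fderiv ℝ α w (0,0,1))]
    rw [clm_expand (fderiv ℝ C (Φ w)) (fderiv ℝ φ w (0,0,1)) (fderiv ℝ β w (0,0,1))
      (fderiv ℝ α w (0,0,1))]
    rw [clm_expand (fderiv ℝ A (Φ w)) (fderiv ℝ φ w (0,1,0)) (fderiv ℝ β w (0,1,0))
      (fderiv ℝ α w (0,1,0))]
    rw [clm_expand (fderiv ℝ B (Φ w)) (fderiv ℝ φ w (0,1,0)) (fderiv ℝ β w (0,1,0))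
      (fderiv ℝ α w (0,1,0))]
    rw [clm_expand (fderiv ℝ C (Φ w)) (fderiv ℝ φ w (0,1,0)) (fderiv ℝ β w (0,1,0))
      (fderiv ℝ α w (0,1,0))]
    rw [clm_expand (fderiv ℝ A (Φ w)) (fderiv ℝ φ w (1,0,0)) (fderiv ℝ β w (1,0,0))
      (fderiv ℝ α w (1,0,0))]
    rw [clm_expand (fderiv ℝ B (Φ w)) (fderiv ℝ φ w (1,0,0)) (fderiv ℝ β w (1,0,0))
      (fderiv ℝ α w (1,0,0))]
    rw [clm_expand (fderiv ℝ C (Φ w)) (fderiv ℝ φ w (1,0,0)) (fderiv ℝ β w (1,0,0))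
      (fderiv ℝ α w (1,0,0))]
    rw [hsφ (0,0,1) (1,0,0), hsφ (0,0,1) (0,1,0), hsφ (0,1,0) (1,0,0),
      hsβ (0,0,1) (1,0,0), hsβ (0,0,1) (0,1,0), hsβ (0,1,0) (1,0,0),
      hsα (0,0,1) (1,0,0), hsα (0,0,1) (0,1,0), hsα (0,1,0) (1,0,0)]
    ring
  -- claim 2: interior product transforms with the Jacobian determinant
  have claim2 : c w * fderiv ℝ α w (1,0,0) - b w * fderiv ℝ α w (0,1,0)
      + a w * fderiv ℝ α w (0,0,1)
      = A (Φ w) *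
        (fderiv ℝ φ w (1,0,0) * (fderiv ℝ β w (0,1,0) * fderiv ℝ α w (0,0,1)
            - fderiv ℝ α w (0,1,0) * fderiv ℝ β w (0,0,1))
          - fderiv ℝ β w (1,0,0) * (fderiv ℝ φ w (0,1,0) * fderiv ℝ α w (0,0,1)
            - fderiv ℝ α w (0,1,0) * fderiv ℝ φ w (0,0,1))
          + fderiv ℝ α w (1,0,0) * (fderiv ℝ φ w (0,1,0) * fderiv ℝ β w (0,0,1)
            - fderiv ℝ β w (0,1,0) * fderiv ℝ φ w (0,0,1))) := by
    rw [ha w, hb w, hc w]; ring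
  rw [claim1, hGrule w hw, claim2]
  generalize g w / a w = t
  field_simp [hA0 w hw]
end
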